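/- For a PFB instance, let σ be an earliest release date ordering of the jobs. Then for every feasible schedule S there exists a feasible permutation schedule Ŝ ordered by σ with max_{j∈{1,…,n}} C_j(Ŝ) ≤ max_{j∈{1,…,n}} C_j(S). In particular, permutation schedules ordered by σ are optimal for minimizing the makespan. -/

import Mathlib

/-- A PFB instance has `m+1` machines (indexed by `Fin (m+1)`, so at least one) and
`n+1` jobs (indexed by `Fin (n+1)`, so at least one). `p i` is the processing time of
machine `i`, `b i` its maximum batch size, `r j` the release date of job `j`.
A schedule `c` assigns to machine `i` and job `j` the completion time `c i j`.
`Feasible p b r c` says: (i) each job finishes on the first machine no earlier than its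
release date plus `p 0`; (ii) consecutive machines leave enough processing time;
(iii) two jobs with different completion times on a machine differ by at least the
processing time (jobs with equal completion time form one batch); (iv) at most `b i`
jobs complete at any given time on machine `i`. -/
def Feasible {m n : ℕ} (p b : Fin (m + 1) → ℕ) (r : Fin (n + 1) → ℕ)
    (c : Fin (m + 1) → Fin (n + 1) → ℕ) : Prop :=
  (∀ j, r j + p 0 ≤ c 0 j) ∧
  (∀ (i : Fin m) (j : Fin (n + 1)), c i.castSucc j + p i.succ ≤ c i.succ j) ∧
  (∀ (i : Fin (m + 1)) (j j' : Fin (n + 1)),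
      c i j ≠ c i j' → c i j + p i ≤ c i j' ∨ c i j' + p i ≤ c i j) ∧
  (∀ (i : Fin (m + 1)) (t : ℕ),
      (Finset.univ.filter (fun j => c i j = t)).card ≤ b i)

/-- `c` is a permutation schedule ordered by the permutation `σ`:
on every machine the completion times are nondecreasing along `σ`. -/
def OrderedBy {m n : ℕ} (c : Fin (m + 1) → Fin (n + 1) → ℕ)
    (σ : Equiv.Perm (Fin (n + 1))) : Prop :=
  ∀ i : Fin (m + 1), Monotone fun j => c i (σ j)


/-- Order statistics are monotone under pointwise domination. -/
lemma sorted_le {N : ℕ} (u v : Fin N → ℕ) (huv : ∀ j, u j ≤ v j) (k : Fin N) :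
    u (Tuple.sort u k) ≤ v (Tuple.sort v k) := by
  by_contra h
  push_neg at h
  set t := v (Tuple.sort v k) with ht
  have h1 : (Finset.Iic k).image (Tuple.sort v) ⊆
      Finset.univ.filter (fun j => v j ≤ t) := by
    intro j hj
    simp only [Finset.mem_image, Finset.mem_Iic] at hj
    obtain ⟨l, hl, rfl⟩ := hj
    simp only [Finset.mem_filter, Finset.mem_univ, true_and]
    exact Tuple.monotone_sort v hl
  have hsub : Finset.univ.filter (fun j => v j ≤ t) ⊆
      Finset.univ.filter (fun j => u j ≤ t) := by
    intro j hj
    simp only [Finset.mem_filter, Finset.mem_univ, true_and] at hj ⊢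
    exact (huv j).trans hj
  have h2 : Finset.univ.filter (fun j => u j ≤ t) ⊆
      (Finset.Iio k).image (Tuple.sort u) := by
    intro j hj
    simp only [Finset.mem_filter, Finset.mem_univ, true_and] at hj
    obtain ⟨l, rfl⟩ := (Tuple.sort u).surjective j
    simp only [Finset.mem_image, Finset.mem_Iio]
    refine ⟨l, ?_, rfl⟩
    by_contra hlk
    push_neg at hlk
    exact absurd (le_trans (Tuple.monotone_sort u hlk) hj) (not_le.mpr h)
  have c1 := Finset.card_le_card (h1.trans (hsub.trans h2))
  rw [Finset.card_image_of_injective _ (Tuple.sort v).injective,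
    Finset.card_image_of_injective _ (Tuple.sort u).injective,
    Fin.card_Iic, Fin.card_Iio] at c1
  omega

lemma sorted_le' {N : ℕ} (u v : Fin N → ℕ) (huv : ∀ j, u j ≤ v j)
    (α : Equiv.Perm (Fin N)) (hα : Monotone (u ∘ α)) (k : Fin N) :
    u (α k) ≤ v (Tuple.sort v k) := by
  have h := congrFun (Tuple.comp_sort_eq_comp_iff_monotone.mpr hα) k
  simp only [Function.comp_apply] at h
  rw [h]
  exact sorted_le u v huv k

/-- for any earliest release date ordering `σ` and any feasible schedule
`c`, there is a feasible permutation schedule ordered by `σ` whose makespan is at most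
the makespan of `c`; in particular such permutation schedules are optimal for
minimizing the makespan. -/
theorem stmt1 {m n : ℕ} (p b : Fin (m + 1) → ℕ) (r : Fin (n + 1) → ℕ)
    (hp : ∀ i, 1 ≤ p i) (hb : ∀ i, 1 ≤ b i ∧ b i ≤ n + 1)
    (c : Fin (m + 1) → Fin (n + 1) → ℕ) (hc : Feasible p b r c)
    (σ : Equiv.Perm (Fin (n + 1))) (hσ : Monotone fun j => r (σ j)) :
    ∃ chat : Fin (m + 1) → Fin (n + 1) → ℕ,
      Feasible p b r chat ∧ OrderedBy chat σ ∧
      Finset.univ.sup (fun j => chat (Fin.last m) j) ≤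
        Finset.univ.sup (fun j => c (Fin.last m) j) := by
  classical
  set τ : Fin (m + 1) → Equiv.Perm (Fin (n + 1)) := fun i => Tuple.sort (c i) with hτ
  set e : Fin (m + 1) → Equiv.Perm (Fin (n + 1)) := fun i => σ.symm.trans (τ i) with he
  refine ⟨fun i j => c i (e i j), ⟨?_, ?_, ?_, ?_⟩, ?_, ?_⟩
  · -- (i)
    intro j
    have h := sorted_le' (fun j => r j + p 0) (c 0) hc.1 σ
      (by exact fun a b hab => Nat.add_le_add_right (hσ hab) _) (σ.symm j)
    simpa [he, hτ, Equiv.apply_symm_apply] using h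
  · -- (ii)
    intro i j
    have h := sorted_le' (fun j => c i.castSucc j + p i.succ) (c i.succ) (hc.2.1 i)
      (τ i.castSucc)
      (by exact fun a b hab => Nat.add_le_add_right (Tuple.monotone_sort (c i.castSucc) hab) _)
      (σ.symm j)
    simpa [he, hτ] using h
  · -- (iii)
    intro i j j' hne
    exact hc.2.2.1 i (e i j) (e i j') hne
  · -- (iv)
    intro i t
    have hcard : (Finset.univ.filter fun j => c i (e i j) = t).card =
        (Finset.univ.filter fun j => c i j = t).card := by
      apply Finset.card_bij (fun j _ => e i j)
      · intro a ha
        simp only [Finset.mem_filter, Finset.mem_univ, true_and] at ha ⊢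
        exact ha
      · intro a _ a' _ hab
        exact (e i).injective hab
      · intro bb hbb
        refine ⟨(e i).symm bb, ?_, by simp⟩
        simp only [Finset.mem_filter, Finset.mem_univ, true_and,
          Equiv.apply_symm_apply] at hbb ⊢
        exact hbb
    rw [hcard]
    exact hc.2.2.2 i t
  · -- OrderedBy
    intro i a b hab
    simp only [he, Equiv.trans_apply, Equiv.symm_apply_apply]
    exact Tuple.monotone_sort (c i) hab
  · -- makespan
    apply Finset.sup_le
    intro j _
    exact Finset.le_sup (Finset.mem_univ (e (Fin.last m) j))
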